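/- Let p > 0 with 2/p ∈ ℕ, ω ≥ 0, γ > 0, and x ∈ ℝ² \ {0}. Then J_{ω+γ}^{[p]}(x) = (|x|_p^γ/(p^{γ−1}Γ(γ))) · ∫₀¹ J_ω^{[p]}(τx)·τ^{(p−1)ω+1}·(1−τ^p)^{γ−1} dτ. -/

import Mathlib

open MeasureTheory Set intervalIntegral

lemma realBeta_integrable {a b : ℝ} (ha : 0 < a) (hb : 0 < b) :
    IntervalIntegrable (fun x : ℝ => x ^ (a-1) * (1-x) ^ (b-1)) volume 0 1 := by
  have hhalf : IntervalIntegrable (fun x : ℝ => x ^ (a-1) * (1-x) ^ (b-1)) volume 0 (1/2) := by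
    apply IntervalIntegrable.mul_continuousOn
    · exact intervalIntegral.intervalIntegrable_rpow' (by linarith)
    · apply ContinuousOn.rpow_const (by fun_prop)
      intro x hx
      rw [uIcc_of_le (by norm_num : (0:ℝ) ≤ 1/2)] at hx
      left; intro h; simp only [sub_eq_zero] at h; linarith [hx.2]
  have hhalf2 : IntervalIntegrable (fun x : ℝ => x ^ (b-1) * (1-x) ^ (a-1)) volume 0 (1/2) := by
    apply IntervalIntegrable.mul_continuousOn
    · exact intervalIntegral.intervalIntegrable_rpow' (by linarith)
    · apply ContinuousOn.rpow_const (by fun_prop)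
      intro x hx
      rw [uIcc_of_le (by norm_num : (0:ℝ) ≤ 1/2)] at hx
      left; intro h; simp only [sub_eq_zero] at h; linarith [hx.2]
  refine hhalf.trans ?_
  have := hhalf2.comp_sub_left 1
  norm_num at this
  have heq : (fun x : ℝ => (1-x) ^ (b-1) * x ^ (a-1)) =
      fun x : ℝ => x ^ (a-1) * (1-x) ^ (b-1) := by
    funext x; rw [mul_comm]
  rw [heq] at this
  exact this.symm

lemma realBeta_eq {a b : ℝ} (ha : 0 < a) (hb : 0 < b) :
    ∫ x in (0:ℝ)..1, x ^ (a-1) * (1-x) ^ (b-1)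
      = Real.Gamma a * Real.Gamma b / Real.Gamma (a+b) := by
  have h1 : Complex.betaIntegral a b = ((∫ x in (0:ℝ)..1, x ^ (a-1) * (1-x) ^ (b-1) : ℝ) : ℂ) := by
    rw [Complex.betaIntegral, ← intervalIntegral.integral_ofReal]
    apply intervalIntegral.integral_congr
    intro x hx
    rw [uIcc_of_le (by norm_num : (0:ℝ) ≤ 1)] at hx
    push_cast
    rw [Complex.ofReal_cpow hx.1, Complex.ofReal_cpow (by linarith [hx.2])]
    push_cast
    ring
  have h2 := Complex.Gamma_mul_Gamma_eq_betaIntegral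
    (show 0 < (a:ℂ).re by simpa using ha) (show 0 < (b:ℂ).re by simpa using hb)
  rw [h1] at h2
  have h3 : ((a:ℂ) + b) = ((a+b : ℝ) : ℂ) := by push_cast; ring
  rw [h3, Complex.Gamma_ofReal, Complex.Gamma_ofReal, Complex.Gamma_ofReal] at h2
  have h4 : (Real.Gamma a * Real.Gamma b : ℝ) =
      (Real.Gamma (a+b) * ∫ x in (0:ℝ)..1, x ^ (a-1) * (1-x) ^ (b-1)) := by
    exact_mod_cast h2
  have h5 : Real.Gamma (a+b) ≠ 0 := (Real.Gamma_pos_of_pos (by linarith)).ne'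
  field_simp [h4]
  rw [h4]; ring

lemma Gamma_mono {u v : ℝ} (h2 : 2 ≤ u) (huv : u ≤ v) : Real.Gamma u ≤ Real.Gamma v :=
  Real.Gamma_strictMonoOn_Ici.monotoneOn h2 (le_trans h2 huv) huv

lemma Gamma_ge_third {u : ℝ} (h1 : 1 ≤ u) (h2 : u ≤ 2) : 1/3 ≤ Real.Gamma u := by
  have hu0 : u ≠ 0 := by linarith
  have hu1 : u + 1 ≠ 0 := by linarith
  have key : Real.Gamma (u + 1 + 1) = (u+1) * (u * Real.Gamma u) := by
    rw [Real.Gamma_add_one hu1, Real.Gamma_add_one hu0]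
  have h3 : Real.Gamma 3 ≤ Real.Gamma (u + 1 + 1) := Gamma_mono (by norm_num) (by linarith)
  have hg3 : Real.Gamma 3 = 2 := by
    rw [show (3:ℝ) = (2:ℕ) + 1 by norm_num, Real.Gamma_nat_eq_factorial]
    norm_num [Nat.factorial]
  have hΓ := Real.Gamma_pos_of_pos (show (0:ℝ) < u by linarith)
  have h6 : (u+1)*u ≤ 6 := by nlinarith
  nlinarith [mul_le_mul_of_nonneg_right h6 hΓ.le]

lemma Gamma_le_three {u : ℝ} (h1 : 1 ≤ u) (h2 : u ≤ 2) : Real.Gamma u ≤ 3 := by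
  have hu0 : u ≠ 0 := by linarith
  have hu1 : u + 1 ≠ 0 := by linarith
  have key : Real.Gamma (u + 1 + 1) = (u+1) * (u * Real.Gamma u) := by
    rw [Real.Gamma_add_one hu1, Real.Gamma_add_one hu0]
  have h3 : Real.Gamma (u + 1 + 1) ≤ Real.Gamma 4 := Gamma_mono (by linarith) (by linarith)
  have hg4 : Real.Gamma 4 = 6 := by
    rw [show (4:ℝ) = (3:ℕ) + 1 by norm_num, Real.Gamma_nat_eq_factorial]
    norm_num [Nat.factorial]
  have hΓ := Real.Gamma_pos_of_pos (show (0:ℝ) < u by linarith)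
  have h6 : 2 ≤ (u+1)*u := by nlinarith
  nlinarith [mul_le_mul_of_nonneg_right h6 hΓ.le]

lemma Gamma_le_nine_mul {s t : ℝ} (hs : 1 ≤ s) (ht : 0 ≤ t) :
    Real.Gamma s ≤ 9 * Real.Gamma (s + t) := by
  rcases le_or_gt 2 s with h2 | h2
  · have := Gamma_mono h2 (by linarith : s ≤ s + t)
    have := Real.Gamma_pos_of_pos (show (0:ℝ) < s by linarith)
    nlinarith
  · have hup : Real.Gamma s ≤ 3 := Gamma_le_three hs h2.le
    have hlow : 1/3 ≤ Real.Gamma (s + t) := by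
      rcases le_or_gt (s + t) 2 with h | h
      · exact Gamma_ge_third (by linarith) h
      · have := Gamma_mono (le_refl 2) h.le
        rw [Real.Gamma_two] at this; linarith
    linarith

lemma Gamma_le_two_mul_succ {s : ℝ} (hs : 1/2 ≤ s) : Real.Gamma s ≤ 2 * Real.Gamma (s + 1) := by
  rw [Real.Gamma_add_one (by linarith : s ≠ 0)]
  nlinarith [Real.Gamma_pos_of_pos (show (0:ℝ) < s by linarith)]

lemma factorial_add_le (n m : ℕ) : (n + m).factorial ≤ n.factorial * (n + m) ^ m := by
  induction m with
  | zero => simp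
  | succ m ih =>
    have h1 : (n + (m+1)).factorial = (n + m + 1) * (n + m).factorial := by
      rw [show n + (m+1) = (n+m) + 1 by omega]; exact Nat.factorial_succ _
    calc (n + (m+1)).factorial = (n + m + 1) * (n + m).factorial := h1
      _ ≤ (n + m + 1) * (n.factorial * (n + m) ^ m) := by
          exact Nat.mul_le_mul_left _ ih
      _ ≤ (n + m + 1) * (n.factorial * (n + m + 1) ^ m) :=
          Nat.mul_le_mul_left _ (Nat.mul_le_mul_left _ (Nat.pow_le_pow_left (by omega) m))
      _ = n.factorial * (n + (m+1)) ^ (m+1) := by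
          rw [show n + (m+1) = n + m + 1 from rfl]; ring

lemma factorial_mul_factorial_le (a b : ℕ) :
    a.factorial * b.factorial ≤ (a + b).factorial :=
  Nat.le_of_dvd (a + b).factorial_pos (Nat.factorial_mul_factorial_dvd_factorial_add a b)

lemma summable_aux (d : ℕ) {y : ℝ} (hy : 0 ≤ y) :
    Summable (fun m : ℕ => (m + 1 : ℝ) ^ d * y ^ m / (Nat.factorial (2 * m) : ℝ)) := by
  refine Summable.of_nonneg_of_le (fun m => by positivity) (fun m => ?_)
    ((Real.summable_pow_div_factorial ((2:ℝ) ^ d * y)).mul_left ((2:ℝ) ^ d))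
  have h1 : (m + 1 : ℝ) ^ d ≤ (2 : ℝ) ^ d * ((2:ℝ) ^ d) ^ m := by
    have : (m + 1 : ℝ) ≤ 2 * 2 ^ m := by
      have := Nat.lt_two_pow_self (n := m + 1)
      have h2 : ((m + 1 : ℕ) : ℝ) ≤ ((2 ^ (m + 1) : ℕ) : ℝ) := by exact_mod_cast this.le
      push_cast at h2
      rw [pow_succ] at h2
      push_cast
      linarith
    calc (m + 1 : ℝ) ^ d ≤ (2 * 2 ^ m : ℝ) ^ d := by
          apply pow_le_pow_left₀ (by positivity) this
      _ = (2:ℝ) ^ d * ((2:ℝ) ^ d) ^ m := by rw [mul_pow, ← pow_mul, ← pow_mul, Nat.mul_comm]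
  have h2 : (Nat.factorial m : ℝ) ≤ (Nat.factorial (2 * m) : ℝ) := by
    exact_mod_cast Nat.factorial_le (by omega)
  calc (m + 1 : ℝ) ^ d * y ^ m / (Nat.factorial (2 * m) : ℝ)
      ≤ ((2:ℝ) ^ d * ((2:ℝ) ^ d) ^ m) * y ^ m / (Nat.factorial m : ℝ) := by
        have hF : (0:ℝ) < (Nat.factorial m : ℝ) := by exact_mod_cast Nat.factorial_pos m
        apply div_le_div₀ (by positivity) (by gcongr) hF h2
    _ = (2:ℝ) ^ d * (((2:ℝ) ^ d * y) ^ m / (Nat.factorial m : ℝ)) := by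
        rw [mul_pow]; ring

lemma sub_rpow_key {p γ c : ℝ} (hp : 0 < p) (hγ : 0 < γ) (hc : 0 ≤ c) :
    IntegrableOn (fun τ : ℝ => τ ^ c * (1 - τ ^ p) ^ (γ - 1)) (Ioc (0:ℝ) 1) volume ∧
    ∫ τ in Ioc (0:ℝ) 1, τ ^ c * (1 - τ ^ p) ^ (γ - 1)
      = Real.Gamma ((c+1)/p) * Real.Gamma γ / (p * Real.Gamma ((c+1)/p + γ)) := by
  set a : ℝ := (c+1)/p with ha_def
  have ha : 0 < a := by positivity
  set f : ℝ → ℝ := (Ioo (0:ℝ) 1).indicator (fun u => u ^ (a-1) * (1-u) ^ (γ-1)) with hf_def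
  have hbeta_int : IntegrableOn (fun u : ℝ => u ^ (a-1) * (1-u) ^ (γ-1)) (Ioo (0:ℝ) 1) volume :=
    (((intervalIntegrable_iff_integrableOn_Ioc_of_le (by norm_num : (0:ℝ) ≤ 1)).mp
      (realBeta_integrable ha hγ))).mono_set Ioo_subset_Ioc_self
  have hf_int : Integrable f volume := by
    rw [hf_def, integrable_indicator_iff measurableSet_Ioo]
    exact hbeta_int
  have key : ∀ x ∈ Ioi (0:ℝ), (p * x ^ (p-1)) • f (x ^ p)
      = (Ioo (0:ℝ) 1).indicator (fun τ => p * (τ ^ c * (1 - τ ^ p) ^ (γ-1))) x := by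
    intro x hx
    rw [mem_Ioi] at hx
    rcases lt_or_ge x 1 with hx1 | hx1
    · have hxm : x ∈ Ioo (0:ℝ) 1 := ⟨hx, hx1⟩
      have hxp : x ^ p ∈ Ioo (0:ℝ) 1 :=
        ⟨Real.rpow_pos_of_pos hx p, Real.rpow_lt_one hx.le hx1 hp⟩
      rw [hf_def, indicator_of_mem hxp, indicator_of_mem hxm]
      have h1 : (x ^ p) ^ (a - 1) = x ^ (p * (a-1)) := by
        rw [← Real.rpow_mul hx.le]
      have hpa : p * a = c + 1 := by rw [ha_def]; field_simp
      have h2 : x ^ (p-1) * x ^ (p * (a-1)) = x ^ c := by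
        rw [← Real.rpow_add hx]
        congr 1
        nlinarith [hpa]
      rw [smul_eq_mul, h1,
        show p * x ^ (p-1) * (x ^ (p * (a-1)) * (1 - x ^ p) ^ (γ-1))
          = p * ((x ^ (p-1) * x ^ (p * (a-1))) * (1 - x ^ p) ^ (γ-1)) by ring, h2]
    · have hxp : x ^ p ∉ Ioo (0:ℝ) 1 := by
        intro h
        exact absurd h.2 (not_lt.mpr (Real.one_le_rpow hx1 hp.le))
      have hxm : x ∉ Ioo (0:ℝ) 1 := by
        intro h; exact absurd h.2 (not_lt.mpr hx1)
      rw [hf_def, indicator_of_notMem hxp, indicator_of_notMem hxm, smul_zero]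
  -- value computation
  have h1 : ∫ x in Ioi (0:ℝ), (p * x ^ (p-1)) • f (x ^ p) = ∫ y in Ioi (0:ℝ), f y :=
    MeasureTheory.integral_comp_rpow_Ioi_of_pos hp
  have hL : ∫ x in Ioi (0:ℝ), (p * x ^ (p-1)) • f (x ^ p)
      = p * ∫ τ in Ioo (0:ℝ) 1, τ ^ c * (1 - τ ^ p) ^ (γ-1) := by
    rw [setIntegral_congr_fun measurableSet_Ioi key,
      setIntegral_indicator measurableSet_Ioo,
      inter_eq_self_of_subset_right (Ioo_subset_Ioi_self),
      MeasureTheory.integral_const_mul]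
  have hR : ∫ y in Ioi (0:ℝ), f y
      = Real.Gamma a * Real.Gamma γ / Real.Gamma (a + γ) := by
    rw [hf_def, setIntegral_indicator measurableSet_Ioo,
      inter_eq_self_of_subset_right (Ioo_subset_Ioi_self),
      ← MeasureTheory.integral_Ioc_eq_integral_Ioo,
      ← intervalIntegral.integral_of_le (by norm_num : (0:ℝ) ≤ 1)]
    exact realBeta_eq ha hγ
  constructor
  · -- integrability
    have h2 : IntegrableOn (fun x : ℝ => (|p| * x ^ (p-1)) • f (x ^ p)) (Ioi 0) volume :=
      (integrableOn_Ioi_comp_rpow_iff f hp.ne').mpr hf_int.integrableOn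
    rw [abs_of_pos hp] at h2
    have h3 : IntegrableOn
        ((Ioo (0:ℝ) 1).indicator (fun τ => p * (τ ^ c * (1 - τ ^ p) ^ (γ-1)))) (Ioi 0) volume :=
      h2.congr_fun key measurableSet_Ioi
    have h4 : IntegrableOn (fun τ : ℝ => p * (τ ^ c * (1 - τ ^ p) ^ (γ-1)))
        (Ioo (0:ℝ) 1) volume := by
      have := (h3.mono_set (Ioo_subset_Ioi_self)).congr_fun
        (fun τ hτ => indicator_of_mem hτ _) measurableSet_Ioo
      exact this
    have h5 : IntegrableOn (fun τ : ℝ => τ ^ c * (1 - τ ^ p) ^ (γ-1)) (Ioo (0:ℝ) 1) volume := by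
      have h6 : IntegrableOn (fun τ : ℝ => p⁻¹ * (p * (τ ^ c * (1 - τ ^ p) ^ (γ-1))))
          (Ioo (0:ℝ) 1) volume := h4.const_mul p⁻¹
      refine h6.congr_fun (fun τ _ => ?_) measurableSet_Ioo
      field_simp
    exact (integrableOn_Ioc_iff_integrableOn_Ioo).mpr h5
  · rw [MeasureTheory.integral_Ioc_eq_integral_Ioo]
    rw [hL, hR] at h1
    have hΓ : Real.Gamma (a + γ) ≠ 0 := (Real.Gamma_pos_of_pos (by linarith)).ne'
    field_simp at h1 ⊢
    linarith [h1]

/-- The `p`-norm on `ℝ²`. -/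
noncomputable def pnorm (p : ℝ) (x : ℝ × ℝ) : ℝ := (|x.1| ^ p + |x.2| ^ p) ^ (1 / p)

/-- The generalized Bessel function `J_ω^{[p]}` on `ℝ²`, via its series representation. -/
noncomputable def genBesselJ (p ω : ℝ) (x : ℝ × ℝ) : ℝ :=
  (pnorm p x / p) ^ ω * (2 / p) ^ 2 / Real.Gamma (1 / p) ^ 2 *
    ∑' k : ℕ, ((-1 : ℝ) ^ k / Real.Gamma ((2 / p) * ((k : ℝ) + 1) + ω)) *
      ∑ n ∈ Finset.range (k + 1),
        Real.Gamma ((2 * (n : ℝ) + 1) / p) * Real.Gamma ((2 * ((k - n : ℕ) : ℝ) + 1) / p) /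
            ((Nat.factorial (2 * n) : ℝ) * (Nat.factorial (2 * (k - n)) : ℝ)) *
          x.1 ^ (2 * n) * x.2 ^ (2 * (k - n))

lemma pnorm_pos {p : ℝ} (hp : 0 < p) {x : ℝ × ℝ} (hx : x ≠ 0) : 0 < pnorm p x := by
  have h : 0 < |x.1| ^ p + |x.2| ^ p := by
    have h1 : x.1 ≠ 0 ∨ x.2 ≠ 0 := by
      by_contra h
      push_neg at h
      exact hx (Prod.ext h.1 h.2)
    rcases h1 with h1 | h1
    · have := Real.rpow_pos_of_pos (abs_pos.mpr h1) p
      have := Real.rpow_nonneg (abs_nonneg x.2) p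
      linarith
    · have := Real.rpow_pos_of_pos (abs_pos.mpr h1) p
      have := Real.rpow_nonneg (abs_nonneg x.1) p
      linarith
  exact Real.rpow_pos_of_pos h _

lemma pnorm_smul {p : ℝ} (hp : 0 < p) {τ : ℝ} (hτ : 0 ≤ τ) (x : ℝ × ℝ) :
    pnorm p (τ * x.1, τ * x.2) = τ * pnorm p x := by
  unfold pnorm
  simp only [abs_mul]
  rw [Real.mul_rpow (abs_nonneg τ) (abs_nonneg x.1),
    Real.mul_rpow (abs_nonneg τ) (abs_nonneg x.2), ← mul_add,
    Real.mul_rpow (Real.rpow_nonneg (abs_nonneg τ) p)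
      (by positivity : (0:ℝ) ≤ |x.1| ^ p + |x.2| ^ p),
    ← Real.rpow_mul (abs_nonneg τ), mul_one_div, div_self hp.ne', Real.rpow_one,
    abs_of_nonneg hτ]

lemma Gamma_coef_bound (q : ℕ) (hq : 1 ≤ q) {β : ℝ} (hβ : 0 ≤ β) (n m : ℕ) :
    Real.Gamma ((q:ℝ)*n + q/2) * Real.Gamma ((q:ℝ)*m + q/2) ≤
      (2916 * (2*(q:ℝ))^(q+1) * ((n:ℝ)+1)^(q+1) * ((m:ℝ)+1)^(q+1)) *
        Real.Gamma ((q:ℝ)*(((n+m:ℕ):ℝ)+1) + β) := by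
  have hq' : (1:ℝ) ≤ (q:ℝ) := by exact_mod_cast hq
  -- step 1 : Γ(q j + q/2) ≤ 18 (q j + q)!
  have step1 : ∀ j : ℕ, Real.Gamma ((q:ℝ)*j + q/2) ≤ 18 * ((q*j+q).factorial : ℝ) := by
    intro j
    have h0 : (0:ℝ) ≤ (q:ℝ)*j := by positivity
    have hs2 : (1:ℝ)/2 ≤ (q:ℝ)*j + (q:ℝ)/2 := by linarith
    have a1 : Real.Gamma ((q:ℝ)*j + (q:ℝ)/2)
        ≤ 2 * Real.Gamma ((q:ℝ)*j + (q:ℝ)/2 + 1) := Gamma_le_two_mul_succ hs2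
    have a2 : Real.Gamma ((q:ℝ)*j + (q:ℝ)/2 + 1)
        ≤ 9 * Real.Gamma ((q:ℝ)*j + (q:ℝ)/2 + 1 + (q:ℝ)/2) :=
      Gamma_le_nine_mul (by linarith) (by linarith)
    have a3 : (q:ℝ)*j + (q:ℝ)/2 + 1 + (q:ℝ)/2 = ((q*j+q : ℕ):ℝ) + 1 := by push_cast; ring
    rw [a3, Real.Gamma_nat_eq_factorial] at a2
    have hg := Real.Gamma_pos_of_pos (show (0:ℝ) < (q:ℝ)*j + (q:ℝ)/2 + 1 by linarith)
    linarith
  have hΓpos : ∀ j : ℕ, 0 < Real.Gamma ((q:ℝ)*j + q/2) := fun j =>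
    Real.Gamma_pos_of_pos (by positivity)
  set N : ℕ := q*(n+m)+q with hN
  have hN1 : 1 ≤ N := by omega
  -- factorial chain in ℕ
  have hfact : (q*n+q).factorial * (q*m+q).factorial ≤ (N + q).factorial := by
    have : q*n+q + (q*m+q) = N + q := by rw [hN]; ring
    calc (q*n+q).factorial * (q*m+q).factorial ≤ (q*n+q + (q*m+q)).factorial :=
          factorial_mul_factorial_le _ _
      _ = (N+q).factorial := by rw [this]
  have hsplit : (N + q).factorial ≤ (N-1).factorial * (N+q)^(q+1) := by
    have h : N - 1 + (q+1) = N + q := by omega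
    calc (N+q).factorial = (N-1 + (q+1)).factorial := by rw [h]
      _ ≤ (N-1).factorial * (N-1+(q+1))^(q+1) := factorial_add_le _ _
      _ = (N-1).factorial * (N+q)^(q+1) := by rw [h]
  have hgam : ((N-1).factorial : ℝ) ≤ 9 * Real.Gamma ((q:ℝ)*(((n+m:ℕ):ℝ)+1) + β) := by
    have c1 : ((N-1).factorial : ℝ) = Real.Gamma (((N-1:ℕ):ℝ) + 1) :=
      (Real.Gamma_nat_eq_factorial _).symm
    have c2 : ((N-1:ℕ):ℝ) + 1 = (N:ℝ) := by
      have : ((N-1:ℕ):ℝ) = (N:ℝ) - 1 := by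
        rw [Nat.cast_sub hN1]; norm_num
      rw [this]; ring
    have c3 : (N:ℝ) = (q:ℝ)*(((n+m:ℕ):ℝ)+1) := by rw [hN]; push_cast; ring
    have c4 : Real.Gamma (N:ℝ) ≤ 9 * Real.Gamma ((N:ℝ) + β) := by
      apply Gamma_le_nine_mul _ hβ
      exact_mod_cast hN1
    rw [c1, c2, ← c3]
    exact c4
  have hpow : ((N+q : ℕ):ℝ)^(q+1) ≤ (2*(q:ℝ))^(q+1) * ((n:ℝ)+1)^(q+1) * ((m:ℝ)+1)^(q+1) := by
    have hb : ((N+q : ℕ):ℝ) ≤ 2*(q:ℝ) * (((n:ℝ)+1) * ((m:ℝ)+1)) := by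
      push_cast [hN]
      nlinarith [Nat.cast_nonneg (α := ℝ) n, Nat.cast_nonneg (α := ℝ) m, hq',
        mul_nonneg (Nat.cast_nonneg (α := ℝ) n) (Nat.cast_nonneg (α := ℝ) m)]
    calc ((N+q : ℕ):ℝ)^(q+1) ≤ (2*(q:ℝ) * (((n:ℝ)+1) * ((m:ℝ)+1)))^(q+1) :=
          pow_le_pow_left₀ (by positivity) hb _
      _ = (2*(q:ℝ))^(q+1) * ((n:ℝ)+1)^(q+1) * ((m:ℝ)+1)^(q+1) := by
          rw [mul_pow, mul_pow, mul_pow]; ring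
  -- combine
  have hΓβpos : 0 < Real.Gamma ((q:ℝ)*(((n+m:ℕ):ℝ)+1) + β) :=
    Real.Gamma_pos_of_pos (by positivity)
  calc Real.Gamma ((q:ℝ)*n + q/2) * Real.Gamma ((q:ℝ)*m + q/2)
      ≤ (18 * ((q*n+q).factorial : ℝ)) * (18 * ((q*m+q).factorial : ℝ)) := by
        apply mul_le_mul (step1 n) (step1 m) (hΓpos m).le (by positivity)
    _ = 324 * (((q*n+q).factorial * (q*m+q).factorial : ℕ) : ℝ) := by push_cast; ring
    _ ≤ 324 * (((N-1).factorial * (N+q)^(q+1) : ℕ) : ℝ) := by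
        have := le_trans hfact hsplit
        have h' : (((q*n+q).factorial * (q*m+q).factorial : ℕ) : ℝ)
            ≤ (((N-1).factorial * (N+q)^(q+1) : ℕ) : ℝ) := by exact_mod_cast this
        linarith
    _ = 324 * ((N-1).factorial : ℝ) * (((N+q : ℕ):ℝ))^(q+1) := by push_cast; ring
    _ ≤ 324 * (9 * Real.Gamma ((q:ℝ)*(((n+m:ℕ):ℝ)+1) + β)) *
          ((2*(q:ℝ))^(q+1) * ((n:ℝ)+1)^(q+1) * ((m:ℝ)+1)^(q+1)) := by
        apply mul_le_mul _ hpow (by positivity) (by positivity)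
        linarith [hgam]
    _ = (2916 * (2*(q:ℝ))^(q+1) * ((n:ℝ)+1)^(q+1) * ((m:ℝ)+1)^(q+1)) *
          Real.Gamma ((q:ℝ)*(((n+m:ℕ):ℝ)+1) + β) := by ring

lemma summable_master (q : ℕ) (hq : 1 ≤ q) {β : ℝ} (hβ : 0 ≤ β) {y₁ y₂ : ℝ}
    (h1 : 0 ≤ y₁) (h2 : 0 ≤ y₂) :
    Summable (fun k : ℕ => (∑ n ∈ Finset.range (k+1),
      Real.Gamma ((q:ℝ)*n + (q:ℝ)/2) * Real.Gamma ((q:ℝ)*((k-n : ℕ):ℝ) + (q:ℝ)/2) /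
        ((Nat.factorial (2*n) : ℝ) * (Nat.factorial (2*(k-n)) : ℝ)) * y₁^n * y₂^(k-n))
      / Real.Gamma ((q:ℝ)*((k:ℝ)+1) + β)) := by
  have hq0 : (0:ℝ) < (q:ℝ) := by exact_mod_cast hq
  have hargpos : ∀ j : ℕ, (0:ℝ) < (q:ℝ)*j + (q:ℝ)/2 := by
    intro j
    have := mul_nonneg hq0.le (Nat.cast_nonneg (α := ℝ) j)
    linarith
  have hΓpos : ∀ j : ℕ, 0 < Real.Gamma ((q:ℝ)*j + (q:ℝ)/2) := fun j =>
    Real.Gamma_pos_of_pos (hargpos j)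
  have hΓβpos : ∀ k : ℕ, 0 < Real.Gamma ((q:ℝ)*((k:ℝ)+1) + β) := by
    intro k
    apply Real.Gamma_pos_of_pos
    have := mul_nonneg hq0.le (Nat.cast_nonneg (α := ℝ) k)
    nlinarith
  set d : ℕ := q + 1 with hd
  set K : ℝ := 2916 * (2*(q:ℝ))^d with hK
  have hKpos : 0 < K := by rw [hK]; positivity
  set F₁ : ℕ → ℝ := fun m => ((m:ℝ)+1)^d * y₁^m / (Nat.factorial (2*m) : ℝ) with hF₁
  set F₂ : ℕ → ℝ := fun m => ((m:ℝ)+1)^d * y₂^m / (Nat.factorial (2*m) : ℝ) with hF₂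
  have hF1 : Summable F₁ := summable_aux d h1
  have hF2 : Summable F₂ := summable_aux d h2
  have hC : Summable (fun k : ℕ => ∑ n ∈ Finset.range (k+1), F₁ n * F₂ (k-n)) := by
    have hn1 : Summable fun m => ‖F₁ m‖ :=
      hF1.congr fun m => (Real.norm_of_nonneg (by rw [hF₁]; positivity)).symm
    have hn2 : Summable fun m => ‖F₂ m‖ :=
      hF2.congr fun m => (Real.norm_of_nonneg (by rw [hF₂]; positivity)).symm
    exact (summable_norm_sum_mul_range_of_summable_norm hn1 hn2).of_norm
  refine Summable.of_nonneg_of_le ?_ ?_ (hC.mul_left K)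
  · intro k
    apply div_nonneg _ (hΓβpos k).le
    apply Finset.sum_nonneg
    intro n _
    have := hΓpos n
    have := hΓpos (k-n)
    have hf1 : (0:ℝ) < (Nat.factorial (2*n) : ℝ) := by exact_mod_cast Nat.factorial_pos _
    have hf2 : (0:ℝ) < (Nat.factorial (2*(k-n)) : ℝ) := by exact_mod_cast Nat.factorial_pos _
    apply mul_nonneg (mul_nonneg _ (pow_nonneg h1 n)) (pow_nonneg h2 _)
    positivity
  · intro k
    rw [Finset.sum_div, Finset.mul_sum]
    apply Finset.sum_le_sum
    intro n hn
    have hnk : n ≤ k := Finset.mem_range_succ_iff.mp hn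
    have hnm : ((n+(k-n) : ℕ):ℝ) = (k:ℝ) := by
      rw [Nat.add_sub_cancel' hnk]
    have hmain := Gamma_coef_bound q hq hβ n (k-n)
    rw [hnm] at hmain
    have hf1 : (0:ℝ) < (Nat.factorial (2*n) : ℝ) := by exact_mod_cast Nat.factorial_pos _
    have hf2 : (0:ℝ) < (Nat.factorial (2*(k-n)) : ℝ) := by exact_mod_cast Nat.factorial_pos _
    calc Real.Gamma ((q:ℝ)*n + (q:ℝ)/2) * Real.Gamma ((q:ℝ)*((k-n : ℕ):ℝ) + (q:ℝ)/2) /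
          ((Nat.factorial (2*n) : ℝ) * (Nat.factorial (2*(k-n)) : ℝ)) * y₁^n * y₂^(k-n) /
          Real.Gamma ((q:ℝ)*((k:ℝ)+1) + β)
        = (Real.Gamma ((q:ℝ)*n + (q:ℝ)/2) * Real.Gamma ((q:ℝ)*((k-n : ℕ):ℝ) + (q:ℝ)/2) /
            Real.Gamma ((q:ℝ)*((k:ℝ)+1) + β)) *
            (y₁^n * y₂^(k-n) / ((Nat.factorial (2*n) : ℝ) * (Nat.factorial (2*(k-n)) : ℝ))) := by
          ring
      _ ≤ (2916 * (2*(q:ℝ))^(q+1) * ((n:ℝ)+1)^(q+1) * (((k-n:ℕ):ℝ)+1)^(q+1)) *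
            (y₁^n * y₂^(k-n) / ((Nat.factorial (2*n) : ℝ) * (Nat.factorial (2*(k-n)) : ℝ))) := by
          apply mul_le_mul_of_nonneg_right _ (by positivity)
          exact (div_le_iff₀ (hΓβpos k)).mpr hmain
      _ = K * (F₁ n * F₂ (k-n)) := by
          rw [hK, hF₁, hF₂, hd]
          ring

theorem genBesselJ_integral_recursion (p ω γ : ℝ) (hp : 0 < p)
    (hq : ∃ q : ℕ, (q : ℝ) = 2 / p) (hω : 0 ≤ ω) (hγ : 0 < γ) (x : ℝ × ℝ) (hx : x ≠ 0) :
    genBesselJ p (ω + γ) x =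
      (pnorm p x) ^ γ / (p ^ (γ - 1) * Real.Gamma γ) *
        ∫ τ in (0 : ℝ)..1,
          genBesselJ p ω (τ * x.1, τ * x.2) * τ ^ ((p - 1) * ω + 1) * (1 - τ ^ p) ^ (γ - 1) := by
  classical
  obtain ⟨q, hqp⟩ := hq
  have hq0 : (0:ℝ) < (q:ℝ) := by rw [hqp]; positivity
  have hq1 : 1 ≤ q := by
    have : 0 < q := by exact_mod_cast hq0
    omega
  have hr0 : 0 < pnorm p x := pnorm_pos hp hx
  set r : ℝ := pnorm p x with hr
  have hrp0 : 0 < r/p := div_pos hr0 hp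
  have hΓγ : 0 < Real.Gamma γ := Real.Gamma_pos_of_pos hγ
  set C : ℝ := (2/p)^2 / Real.Gamma (1/p)^2 with hC
  have hC0 : 0 ≤ C := by rw [hC]; positivity
  set S : ℕ → ℝ := fun k => ∑ n ∈ Finset.range (k+1),
      Real.Gamma ((2*(n:ℝ)+1)/p) * Real.Gamma ((2*((k-n:ℕ):ℝ)+1)/p) /
        ((Nat.factorial (2*n):ℝ) * (Nat.factorial (2*(k-n)):ℝ)) *
        x.1^(2*n) * x.2^(2*(k-n)) with hS
  have hS0 : ∀ k, 0 ≤ S k := by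
    intro k
    rw [hS]
    apply Finset.sum_nonneg
    intro n _
    have hg1 := Real.Gamma_pos_of_pos (show (0:ℝ) < (2*(n:ℝ)+1)/p by positivity)
    have hg2 := Real.Gamma_pos_of_pos (show (0:ℝ) < (2*((k-n:ℕ):ℝ)+1)/p by positivity)
    have hx1 : (0:ℝ) ≤ x.1^(2*n) := by rw [pow_mul]; positivity
    have hx2 : (0:ℝ) ≤ x.2^(2*(k-n)) := by rw [pow_mul]; positivity
    have hf1 : (0:ℝ) < (Nat.factorial (2*n) : ℝ) := by exact_mod_cast Nat.factorial_pos _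
    have hf2 : (0:ℝ) < (Nat.factorial (2*(k-n)) : ℝ) := by exact_mod_cast Nat.factorial_pos _
    positivity
  set A : ℕ → ℝ := fun k => (2/p) * ((k:ℝ)+1) + ω with hA
  have hA_pos : ∀ k, 0 < A k := by
    intro k; rw [hA]
    have : (0:ℝ) < (2/p) * ((k:ℝ)+1) := by positivity
    linarith
  have hAγ_pos : ∀ k, 0 < A k + γ := fun k => by linarith [hA_pos k]
  set Ck : ℕ → ℝ := fun k =>
      ((r/p)^ω * C) * ((-1:ℝ)^k * (S k / Real.Gamma (A k))) with hCk
  set e : ℕ → ℝ := fun k => 2*(k:ℝ) + (p*ω+1) with he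
  have he0 : ∀ k, 0 ≤ e k := by
    intro k
    have h1 : (0:ℝ) ≤ p*ω := mul_nonneg hp.le hω
    have h2 : (0:ℝ) ≤ 2*(k:ℝ) := by positivity
    rw [he]; dsimp only; linarith
  have harg : ∀ k, (e k + 1)/p = A k := by
    intro k
    rw [he, hA]
    dsimp only
    field_simp
    ring
  have hkey : ∀ k, IntegrableOn (fun τ : ℝ => τ ^ (e k) * (1 - τ^p)^(γ-1))
        (Ioc (0:ℝ) 1) volume ∧
      ∫ τ in Ioc (0:ℝ) 1, τ ^ (e k) * (1 - τ^p)^(γ-1)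
        = Real.Gamma (A k) * Real.Gamma γ / (p * Real.Gamma (A k + γ)) := by
    intro k
    have h := sub_rpow_key hp hγ (he0 k)
    rwa [harg k] at h
  set H : ℕ → ℝ → ℝ := fun k τ => Ck k * (τ ^ (e k) * (1 - τ^p)^(γ-1)) with hH
  -- pointwise identity
  have hpt : ∀ τ ∈ Ioc (0:ℝ) 1,
      genBesselJ p ω (τ*x.1, τ*x.2) * τ^((p-1)*ω+1) * (1-τ^p)^(γ-1) = ∑' k, H k τ := by
    intro τ hτ
    obtain ⟨hτ0, hτ1⟩ := hτ
    have hpn : pnorm p (τ*x.1, τ*x.2) = τ * r := pnorm_smul hp hτ0.le x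
    have hsτ : ∀ k, (∑ n ∈ Finset.range (k+1),
        Real.Gamma ((2*(n:ℝ)+1)/p) * Real.Gamma ((2*((k-n:ℕ):ℝ)+1)/p) /
          ((Nat.factorial (2*n):ℝ) * (Nat.factorial (2*(k-n)):ℝ)) *
          (τ*x.1)^(2*n) * (τ*x.2)^(2*(k-n))) = τ^(2*k) * S k := by
      intro k
      rw [hS, Finset.mul_sum]
      apply Finset.sum_congr rfl
      intro n hn
      have hnk : n ≤ k := Finset.mem_range_succ_iff.mp hn
      rw [mul_pow, mul_pow]
      have hpp : τ^(2*n) * τ^(2*(k-n)) = τ^(2*k) := by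
        rw [← pow_add]; congr 1; omega
      calc Real.Gamma ((2*(n:ℝ)+1)/p) * Real.Gamma ((2*((k-n:ℕ):ℝ)+1)/p) /
            ((Nat.factorial (2*n):ℝ) * (Nat.factorial (2*(k-n)):ℝ)) *
            (τ^(2*n) * x.1^(2*n)) * (τ^(2*(k-n)) * x.2^(2*(k-n)))
          = (τ^(2*n) * τ^(2*(k-n))) * (Real.Gamma ((2*(n:ℝ)+1)/p) *
              Real.Gamma ((2*((k-n:ℕ):ℝ)+1)/p) /
              ((Nat.factorial (2*n):ℝ) * (Nat.factorial (2*(k-n)):ℝ)) *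
              x.1^(2*n) * x.2^(2*(k-n))) := by ring
        _ = τ^(2*k) * (Real.Gamma ((2*(n:ℝ)+1)/p) * Real.Gamma ((2*((k-n:ℕ):ℝ)+1)/p) /
              ((Nat.factorial (2*n):ℝ) * (Nat.factorial (2*(k-n)):ℝ)) *
              x.1^(2*n) * x.2^(2*(k-n))) := by rw [hpp]
    have hgb : genBesselJ p ω (τ*x.1, τ*x.2)
        = (τ*r/p)^ω * (2/p)^2 / Real.Gamma (1/p)^2 *
          ∑' k : ℕ, ((-1:ℝ)^k / Real.Gamma ((2/p)*((k:ℝ)+1)+ω)) * (τ^(2*k) * S k) := by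
      unfold genBesselJ
      rw [hpn]
      congr 1
      apply tsum_congr
      intro k
      congr 1
      exact hsτ k
    rw [hgb]
    rw [show (τ*r/p)^ω * (2/p)^2 / Real.Gamma (1/p)^2 *
          (∑' k : ℕ, ((-1:ℝ)^k / Real.Gamma ((2/p)*((k:ℝ)+1)+ω)) * (τ^(2*k) * S k)) *
          τ^((p-1)*ω+1) * (1-τ^p)^(γ-1)
        = ((τ*r/p)^ω * (2/p)^2 / Real.Gamma (1/p)^2 * τ^((p-1)*ω+1) * (1-τ^p)^(γ-1)) *
          (∑' k : ℕ, ((-1:ℝ)^k / Real.Gamma ((2/p)*((k:ℝ)+1)+ω)) * (τ^(2*k) * S k)) by ring,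
      ← tsum_mul_left]
    apply tsum_congr
    intro k
    have hmul : (τ*r/p)^ω = τ^ω * (r/p)^ω := by
      rw [show τ*r/p = τ*(r/p) by ring, Real.mul_rpow hτ0.le hrp0.le]
    have hτpow : τ^ω * τ^((p-1)*ω+1) * τ^(2*k) = τ ^ (e k) := by
      rw [he]
      dsimp only
      rw [← Real.rpow_natCast τ (2*k), ← Real.rpow_add hτ0, ← Real.rpow_add hτ0]
      congr 1
      push_cast
      ring
    rw [hH, hCk, hA]
    dsimp only
    rw [hmul, ← hτpow]
    ring
  -- integrability of each H k
  have hInt : ∀ k, Integrable (H k) (volume.restrict (Ioc (0:ℝ) 1)) := by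
    intro k
    have h : IntegrableOn (H k) (Ioc (0:ℝ) 1) volume := by
      rw [hH]
      exact (hkey k).1.const_mul _
    exact h
  -- norm integrals
  have hnorm : ∀ k, ∫ τ in Ioc (0:ℝ) 1, ‖H k τ‖
      = |Ck k| * (Real.Gamma (A k) * Real.Gamma γ / (p * Real.Gamma (A k + γ))) := by
    intro k
    have heq : ∀ τ ∈ Ioc (0:ℝ) 1, ‖H k τ‖ = |Ck k| * (τ ^ (e k) * (1 - τ^p)^(γ-1)) := by
      intro τ hτ
      have hτp : τ^p ≤ 1 := Real.rpow_le_one hτ.1.le hτ.2 hp.le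
      have hg0 : (0:ℝ) ≤ τ ^ (e k) * (1 - τ^p)^(γ-1) :=
        mul_nonneg (Real.rpow_nonneg hτ.1.le _) (Real.rpow_nonneg (by linarith) _)
      rw [hH]
      dsimp only
      rw [Real.norm_eq_abs, abs_mul, abs_of_nonneg hg0]
    rw [setIntegral_congr_fun measurableSet_Ioc heq, MeasureTheory.integral_const_mul,
      (hkey k).2]
  have habs : ∀ k, |Ck k| = ((r/p)^ω * C) * (S k / Real.Gamma (A k)) := by
    intro k
    have h1 : (0:ℝ) ≤ (r/p)^ω * C := mul_nonneg (Real.rpow_nonneg hrp0.le _) hC0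
    have h2 : (0:ℝ) ≤ S k / Real.Gamma (A k) :=
      div_nonneg (hS0 k) (Real.Gamma_pos_of_pos (hA_pos k)).le
    rw [hCk]
    dsimp only
    rw [abs_mul, abs_mul, abs_mul, abs_pow, abs_neg, abs_one, one_pow, one_mul,
      abs_of_nonneg (Real.rpow_nonneg hrp0.le ω), abs_of_nonneg hC0, abs_of_nonneg h2]
  -- summability of norm integrals
  have harg1 : ∀ j : ℕ, (q:ℝ)*j + (q:ℝ)/2 = (2*(j:ℝ)+1)/p := by
    intro j
    rw [hqp]
    field_simp
  have hsum2 : Summable (fun k => S k / Real.Gamma ((q:ℝ)*((k:ℝ)+1) + (ω+γ))) := by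
    have hm := summable_master q hq1 (β := ω+γ) (by linarith) (sq_nonneg x.1) (sq_nonneg x.2)
    apply hm.congr
    intro k
    congr 1
    rw [hS]
    apply Finset.sum_congr rfl
    intro n hn
    rw [harg1 n, harg1 (k-n), ← pow_mul, ← pow_mul]
  have hAγeq : ∀ k, A k + γ = (q:ℝ)*((k:ℝ)+1) + (ω+γ) := by
    intro k; rw [hA, hqp]; dsimp only; ring
  have hSum : Summable (fun k => ∫ τ in Ioc (0:ℝ) 1, ‖H k τ‖) := by
    apply Summable.congr (hsum2.mul_left (((r/p)^ω * C) * (Real.Gamma γ / p)))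
    intro k
    rw [hnorm k, habs k, hAγeq k]
    have hΓA := Real.Gamma_pos_of_pos (hA_pos k)
    have hΓAγ := Real.Gamma_pos_of_pos (show (0:ℝ) < (q:ℝ)*((k:ℝ)+1) + (ω+γ) by
      rw [← hAγeq k]; exact hAγ_pos k)
    field_simp
  -- the interchange
  have hIoc : (∫ τ in (0:ℝ)..1,
        genBesselJ p ω (τ*x.1, τ*x.2) * τ^((p-1)*ω+1) * (1-τ^p)^(γ-1))
      = ∑' k, ∫ τ in Ioc (0:ℝ) 1, H k τ := by
    rw [intervalIntegral.integral_of_le (by norm_num : (0:ℝ) ≤ 1),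
      setIntegral_congr_fun measurableSet_Ioc (fun τ hτ => hpt τ hτ)]
    exact (MeasureTheory.integral_tsum_of_summable_integral_norm hInt hSum).symm
  rw [hIoc]
  -- final algebra
  have hval : ∀ k, ∫ τ in Ioc (0:ℝ) 1, H k τ
      = Ck k * (Real.Gamma (A k) * Real.Gamma γ / (p * Real.Gamma (A k + γ))) := by
    intro k
    rw [hH]
    dsimp only
    rw [MeasureTheory.integral_const_mul, (hkey k).2]
  rw [tsum_congr hval, ← tsum_mul_left]
  have hpγ : p ^ (γ-1) * p = p ^ γ := by
    calc p ^ (γ-1) * p = p ^ (γ-1) * p ^ (1:ℝ) := by rw [Real.rpow_one]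
      _ = p ^ ((γ-1)+1) := (Real.rpow_add hp _ _).symm
      _ = p ^ γ := by congr 1; ring
  have hsplit : (r/p)^(ω+γ) = r^γ * (r/p)^ω / (p^(γ-1) * p) := by
    have h1 : (r/p) ^ γ = r^γ / p^γ := Real.div_rpow hr0.le hp.le γ
    have hpγ0 : (0:ℝ) < p ^ γ := Real.rpow_pos_of_pos hp γ
    rw [Real.rpow_add hrp0, h1, hpγ]
    field_simp
  have hSbody : ∀ k : ℕ, (∑ n ∈ Finset.range (k+1),
      Real.Gamma ((2*(n:ℝ)+1)/p) * Real.Gamma ((2*((k-n:ℕ):ℝ)+1)/p) /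
        ((Nat.factorial (2*n):ℝ) * (Nat.factorial (2*(k-n)):ℝ)) *
        x.1^(2*n) * x.2^(2*(k-n))) = S k := fun k => rfl
  unfold genBesselJ
  rw [← hr, ← tsum_mul_left]
  apply tsum_congr
  intro k
  have hΓA := Real.Gamma_pos_of_pos (hA_pos k)
  have hΓAγ := Real.Gamma_pos_of_pos (hAγ_pos k)
  have hΓp := Real.Gamma_pos_of_pos (show (0:ℝ) < 1/p by positivity)
  have hpγ0 : (0:ℝ) < p ^ (γ-1) := Real.rpow_pos_of_pos hp _
  rw [hSbody k, show (2/p)*((k:ℝ)+1) + (ω+γ) = A k + γ by rw [hA]; dsimp only; ring]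
  simp only [hCk]
  have hc1 : S k / Real.Gamma (A k) *
        (Real.Gamma (A k) * Real.Gamma γ / (p * Real.Gamma (A k + γ)))
      = S k * Real.Gamma γ / (p * Real.Gamma (A k + γ)) := by
    field_simp
  have hc2 : r^γ/(p^(γ-1)*Real.Gamma γ) *
        ((r/p)^ω * C * ((-1:ℝ)^k * (S k * Real.Gamma γ / (p * Real.Gamma (A k + γ)))))
      = (r/p)^(ω+γ) * C * ((-1:ℝ)^k * (S k / Real.Gamma (A k + γ))) := by
    rw [hsplit]
    field_simp [hp.ne', hΓγ.ne', hpγ0.ne', hΓAγ.ne']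
  calc (r/p)^(ω+γ) * (2/p)^2 / Real.Gamma (1/p)^2 *
        (((-1:ℝ)^k / Real.Gamma (A k + γ)) * S k)
      = (r/p)^(ω+γ) * C * ((-1:ℝ)^k * (S k / Real.Gamma (A k + γ))) := by
        rw [hC]; ring
    _ = r^γ/(p^(γ-1)*Real.Gamma γ) *
          ((r/p)^ω * C * ((-1:ℝ)^k * (S k * Real.Gamma γ / (p * Real.Gamma (A k + γ))))) :=
        hc2.symm
    _ = r^γ/(p^(γ-1)*Real.Gamma γ) *
          ((r/p)^ω * C * ((-1:ℝ)^k * (S k / Real.Gamma (A k) *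
            (Real.Gamma (A k) * Real.Gamma γ / (p * Real.Gamma (A k + γ)))))) := by
        rw [hc1]
    _ = r^γ/(p^(γ-1)*Real.Gamma γ) *
          ((r/p)^ω * C * ((-1:ℝ)^k * (S k / Real.Gamma (A k))) *
            (Real.Gamma (A k) * Real.Gamma γ / (p * Real.Gamma (A k + γ)))) := by
        ring
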